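/- arXiv:2307.14090 — 2 statements merged into one kernel-verified Lean document; each statement's English description precedes it below -/
import Mathlib

section
/- Let A : ℝ → (H →L[ℝ] H) be such that every solution of ẏ = A(t)y satisfies ‖y(t)‖ ≤ D e^{-λ(t-s)}‖y(s)‖ for all t ≥ s ≥ 0, with D ≥ 1, λ > 0. Let E : ℝ → (H →L[ℝ] H) be bounded with ‖E‖_∞ < λ/(√2 D). Then every solution y of ẏ = (A(t)+E(t))y satisfies ∫_{s₀}^∞ ‖y(t)‖² dt ≤ (λ D²/(λ² − 2D²‖E‖_∞²)) ‖y(s₀)‖² for all s₀ ≥ 0. -/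
open MeasureTheory Real Set
open scoped ENNReal

section Helpers

lemma cs_integral {α : Type*} [MeasurableSpace α] {μ : Measure α} {u v : α → ℝ}
    (hu2 : Integrable (fun s => u s ^ 2) μ) (hv2 : Integrable (fun s => v s ^ 2) μ)
    (huv : Integrable (fun s => u s * v s) μ) :
    (∫ s, u s * v s ∂μ) ^ 2 ≤ (∫ s, u s ^ 2 ∂μ) * (∫ s, v s ^ 2 ∂μ) := by
  have key : ∀ x : ℝ, 0 ≤ (∫ s, u s ^ 2 ∂μ) * (x * x) + (2 * ∫ s, u s * v s ∂μ) * x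
      + ∫ s, v s ^ 2 ∂μ := by
    intro x
    have h0 : 0 ≤ ∫ s, (x * u s + v s) ^ 2 ∂μ := integral_nonneg fun s => sq_nonneg _
    have hexp : ∫ s, (x * u s + v s) ^ 2 ∂μ
        = (∫ s, u s ^ 2 ∂μ) * (x * x) + (2 * ∫ s, u s * v s ∂μ) * x + ∫ s, v s ^ 2 ∂μ := by
      have h1 : (fun s => (x * u s + v s) ^ 2)
          = fun s => (x ^ 2) * u s ^ 2 + ((2 * x) * (u s * v s) + v s ^ 2) := by
        funext s; ring
      have hA : Integrable (fun s => 2 * x * (u s * v s) + v s ^ 2) μ := by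
        exact (huv.const_mul _).add hv2
      have hB : Integrable (fun s => x ^ 2 * u s ^ 2) μ := hu2.const_mul _
      have hC : Integrable (fun s => 2 * x * (u s * v s)) μ := huv.const_mul _
      rw [h1, integral_add hB hA, integral_add hC hv2, integral_const_mul (x ^ 2),
        integral_const_mul (2 * x)]
      ring
    linarith [hexp ▸ h0]
  have hd := discrim_le_zero key
  rw [discrim] at hd
  nlinarith [hd]

lemma exp_decay_integrableOn (a c : ℝ) (hc : 0 < c) :
    IntegrableOn (fun t => exp (-c * (t - a))) (Ioi a) := by
  have h : (fun t : ℝ => exp (-c * (t - a))) = fun t => exp (c * a) * exp (-c * t) := by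
    funext t; rw [← Real.exp_add]; ring_nf
  rw [h]
  exact (exp_neg_integrableOn_Ioi a hc).const_mul _

lemma exp_decay_integral (a c : ℝ) (hc : 0 < c) :
    ∫ t in Ioi a, exp (-c * (t - a)) = 1 / c := by
  have hderiv : ∀ x ∈ Ici a, HasDerivAt (fun t => -exp (-c * (t - a)) / c)
      (exp (-c * (x - a))) x := by
    intro x _
    have h1 : HasDerivAt (fun t : ℝ => -c * (t - a)) (-c) x := by
      simpa using ((hasDerivAt_id x).sub_const a).const_mul (-c)
    have h2 := (h1.exp).neg.div_const c
    convert h2 using 1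
    · rfl
    · rfl
    · rfl
    · rw [eq_div_iff hc.ne']; ring
  have htend : Filter.Tendsto (fun t => -exp (-c * (t - a)) / c) Filter.atTop (nhds 0) := by
    have h1 : Filter.Tendsto (fun t : ℝ => -c * (t - a)) Filter.atTop Filter.atBot := by
      have hshift : Filter.Tendsto (fun t : ℝ => t - a) Filter.atTop Filter.atTop :=
        Filter.tendsto_atTop_add_const_right _ (-a) Filter.tendsto_id
      have h0 : Filter.Tendsto (fun t : ℝ => c * (t - a)) Filter.atTop Filter.atTop :=
        hshift.const_mul_atTop hc
      exact (Filter.tendsto_neg_atTop_atBot.comp h0).congr fun t => by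
        show -(c * (t - a)) = -c * (t - a)
        ring
    have h2 : Filter.Tendsto (fun t : ℝ => exp (-c * (t - a))) Filter.atTop (nhds 0) :=
      Real.tendsto_exp_atBot.comp h1
    simpa using (h2.neg).div_const c
  have := integral_Ioi_of_hasDerivAt_of_tendsto' hderiv (exp_decay_integrableOn a c hc) htend
  rw [this]
  norm_num [neg_div]

lemma exp_decay_lintegral_Ici (a c : ℝ) (hc : 0 < c) :
    ∫⁻ t in Ici a, ENNReal.ofReal (exp (-c * (t - a))) = ENNReal.ofReal (1 / c) := by
  have hres : volume.restrict (Ici a) = volume.restrict (Ioi a) :=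
    (Measure.restrict_congr_set Ioi_ae_eq_Ici).symm
  rw [hres, ← ofReal_integral_eq_lintegral_ofReal (exp_decay_integrableOn a c hc)
    (Filter.Eventually.of_forall fun t => (exp_pos _).le), exp_decay_integral a c hc]

end Helpers

set_option maxHeartbeats 2000000 in
/-- Perturbed exponential stability implies a uniform L² bound on trajectories,
via the Duhamel/mild formulation. -/
theorem stmt_0
    {H : Type*} [NormedAddCommGroup H] [InnerProductSpace ℝ H] [CompleteSpace H]
    (Φ : ℝ → ℝ → (H →L[ℝ] H)) (E : ℝ → (H →L[ℝ] H))
    (D lam M : ℝ) (hD : 1 ≤ D) (hlam : 0 < lam)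
    (hΦ : ∀ t s : ℝ, 0 ≤ s → s ≤ t → ‖Φ t s‖ ≤ D * exp (-lam * (t - s)))
    (hE : ∀ t : ℝ, ‖E t‖ ≤ M)
    (hM : M < lam / (Real.sqrt 2 * D))
    (y : ℝ → H) (s₀ : ℝ) (hs₀ : 0 ≤ s₀)
    (hmild : ∀ t : ℝ, s₀ ≤ t →
      y t = Φ t s₀ (y s₀) + ∫ s in s₀..t, Φ t s (E s (y s))) :
    ∫ t in Set.Ici s₀, ‖y t‖ ^ 2 ≤
      (lam * D ^ 2 / (lam ^ 2 - 2 * D ^ 2 * M ^ 2)) * ‖y s₀‖ ^ 2 := by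
  have hM0 : 0 ≤ M := le_trans (norm_nonneg _) (hE 0)
  have hD0 : (0:ℝ) < D := lt_of_lt_of_le one_pos hD
  have hsd : M * (Real.sqrt 2 * D) < lam := by
    have h2 : (0:ℝ) < Real.sqrt 2 * D := by positivity
    exact (lt_div_iff₀ h2).mp hM
  have hsq2 : Real.sqrt 2 ^ 2 = 2 := Real.sq_sqrt (by norm_num)
  have hden : 0 < lam ^ 2 - 2 * D ^ 2 * M ^ 2 := by
    have h0 : 0 ≤ M * (Real.sqrt 2 * D) := by positivity
    nlinarith [hsd, h0, hsq2]
  by_cases hInt : IntegrableOn (fun t => ‖y t‖ ^ 2) (Ici s₀) volume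
  swap
  · rw [MeasureTheory.integral_undef hInt]
    have : (0:ℝ) ≤ lam * D ^ 2 / (lam ^ 2 - 2 * D ^ 2 * M ^ 2) :=
      div_nonneg (by positivity) hden.le
    positivity
  -- measurable nonnegative representative of ‖y ·‖²
  obtain ⟨G0, hG0m, hG0ae⟩ : ∃ G0 : ℝ → ℝ, StronglyMeasurable G0 ∧
      (fun t => ‖y t‖ ^ 2) =ᵐ[volume.restrict (Ici s₀)] G0 :=
    ⟨hInt.1.mk _, hInt.1.stronglyMeasurable_mk, hInt.1.ae_eq_mk⟩
  set G : ℝ → ℝ := fun t => max (G0 t) 0 with hGdef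
  have hGm : Measurable G := hG0m.measurable.max measurable_const
  have hGnn : ∀ t, 0 ≤ G t := fun t => le_max_right _ _
  have hGae : (fun t => ‖y t‖ ^ 2) =ᵐ[volume.restrict (Ici s₀)] G := by
    filter_upwards [hG0ae] with t ht
    rw [hGdef]
    simp only
    rw [← ht]
    exact (max_eq_left (by positivity)).symm
  have hIntG : IntegrableOn G (Ici s₀) := hInt.congr hGae
  have hsubIoc : ∀ t : ℝ, Ioc s₀ t ⊆ Ici s₀ := fun t x hx => le_of_lt hx.1
  have hf2Ioc : ∀ t : ℝ, IntegrableOn (fun s => ‖y s‖ ^ 2) (Ioc s₀ t) :=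
    fun t => hInt.mono_set (hsubIoc t)
  have hGIoc : ∀ t : ℝ, IntegrableOn G (Ioc s₀ t) := fun t => hIntG.mono_set (hsubIoc t)
  have hfasm : ∀ t : ℝ, AEStronglyMeasurable (fun s => ‖y s‖) (volume.restrict (Ioc s₀ t)) := by
    intro t
    have h1 : (fun s : ℝ => ‖y s‖) = fun s => Real.sqrt (‖y s‖ ^ 2) := by
      funext s; rw [Real.sqrt_sq (norm_nonneg _)]
    rw [h1]
    exact Real.continuous_sqrt.comp_aestronglyMeasurable (hf2Ioc t).1
  have hfIoc : ∀ t : ℝ, IntegrableOn (fun s => ‖y s‖) (Ioc s₀ t) := by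
    intro t
    have hbd : Integrable (fun s => (1:ℝ) + ‖y s‖ ^ 2) (volume.restrict (Ioc s₀ t)) := by
      exact (integrableOn_const measure_Ioc_lt_top.ne).add (hf2Ioc t)
    refine Integrable.mono' hbd (hfasm t) ?_
    filter_upwards with s
    rw [Real.norm_of_nonneg (norm_nonneg _)]
    nlinarith [norm_nonneg (y s), sq_nonneg (‖y s‖ - 1)]
  set c1 : ℝ := 2 * D ^ 2 * M ^ 2 / lam with hc1def
  have hc1nn : 0 ≤ c1 := by positivity
  -- the pointwise key estimate
  have key : ∀ t, s₀ ≤ t → ‖y t‖ ^ 2 ≤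
      2 * D ^ 2 * ‖y s₀‖ ^ 2 * exp (-(2 * lam) * (t - s₀))
      + c1 * ∫ s in s₀..t, exp (-lam * (t - s)) * ‖y s‖ ^ 2 := by
    intro t ht
    have hJnn : 0 ≤ ∫ s in s₀..t, exp (-lam * (t - s)) * ‖y s‖ ^ 2 :=
      intervalIntegral.integral_nonneg ht (fun s _ => by positivity)
    have hInn : 0 ≤ ∫ s in s₀..t, exp (-lam * (t - s)) * ‖y s‖ :=
      intervalIntegral.integral_nonneg ht (fun s _ => by positivity)
    -- step A : Duhamel bound
    have hA : ‖y t‖ ≤ D * exp (-lam * (t - s₀)) * ‖y s₀‖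
        + D * M * ∫ s in s₀..t, exp (-lam * (t - s)) * ‖y s‖ := by
      rw [hmild t ht]
      refine le_trans (norm_add_le _ _) (add_le_add ?_ ?_)
      · exact le_trans ((Φ t s₀).le_opNorm _)
          (mul_le_mul_of_nonneg_right (hΦ t s₀ hs₀ ht) (norm_nonneg _))
      · by_cases hii : IntervalIntegrable (fun s => Φ t s (E s (y s))) volume s₀ t
        · have hle : ∀ s ∈ Icc s₀ t, ‖Φ t s (E s (y s))‖
              ≤ D * M * (exp (-lam * (t - s)) * ‖y s‖) := by
            intro s hs
            have h1 : ‖Φ t s (E s (y s))‖ ≤ ‖Φ t s‖ * ‖E s (y s)‖ := (Φ t s).le_opNorm _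
            have h2 : ‖E s (y s)‖ ≤ M * ‖y s‖ :=
              le_trans ((E s).le_opNorm _)
                (mul_le_mul_of_nonneg_right (hE s) (norm_nonneg _))
            have h3 : ‖Φ t s‖ ≤ D * exp (-lam * (t - s)) := hΦ t s (le_trans hs₀ hs.1) hs.2
            calc ‖Φ t s (E s (y s))‖ ≤ ‖Φ t s‖ * ‖E s (y s)‖ := h1
              _ ≤ (D * exp (-lam * (t - s))) * (M * ‖y s‖) :=
                  mul_le_mul h3 h2 (norm_nonneg _) (by positivity)
              _ = D * M * (exp (-lam * (t - s)) * ‖y s‖) := by ring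
          have hint2 : IntervalIntegrable
              (fun s => D * M * (exp (-lam * (t - s)) * ‖y s‖)) volume s₀ t := by
            rw [intervalIntegrable_iff_integrableOn_Ioc_of_le ht]
            have hbase : IntegrableOn (fun s => exp (-lam * (t - s)) * ‖y s‖) (Ioc s₀ t) := by
              refine Integrable.mono' (hfIoc t)
                (((Real.continuous_exp.comp
                    (continuous_const.mul (continuous_const.sub continuous_id))).aestronglyMeasurable).mul
                  (hfasm t)) ?_
              filter_upwards [ae_restrict_mem measurableSet_Ioc] with s hs
              rw [Real.norm_of_nonneg (by positivity)]
              have hle1 : exp (-lam * (t - s)) ≤ 1 := by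
                have : -lam * (t - s) ≤ 0 := by nlinarith [hs.2]
                simpa using Real.exp_le_exp.2 this
              nlinarith [norm_nonneg (y s), exp_pos (-lam * (t - s))]
            exact hbase.const_mul _
          calc ‖∫ s in s₀..t, Φ t s (E s (y s))‖
              ≤ ∫ s in s₀..t, ‖Φ t s (E s (y s))‖ :=
                intervalIntegral.norm_integral_le_integral_norm ht
            _ ≤ ∫ s in s₀..t, D * M * (exp (-lam * (t - s)) * ‖y s‖) :=
                intervalIntegral.integral_mono_on ht hii.norm hint2 hle
            _ = D * M * ∫ s in s₀..t, exp (-lam * (t - s)) * ‖y s‖ :=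
                intervalIntegral.integral_const_mul _ _
        · rw [intervalIntegral.integral_undef hii]
          simp only [norm_zero]
          positivity
    -- step B : Cauchy–Schwarz
    set u : ℝ → ℝ := fun s => exp (-lam * (t - s) / 2) with hu
    have hucont : Continuous u :=
      Real.continuous_exp.comp
        ((continuous_const.mul (continuous_const.sub continuous_id)).div_const 2)
    have husq : ∀ s, u s ^ 2 = exp (-lam * (t - s)) := by
      intro s; rw [hu]; simp only
      rw [sq, ← Real.exp_add, add_halves]
    have huble : ∀ s, s ∈ Ioc s₀ t → u s ^ 2 ≤ 1 := by
      intro s hs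
      rw [husq]
      have : -lam * (t - s) ≤ 0 := by nlinarith [hs.2]
      simpa using Real.exp_le_exp.2 this
    set v : ℝ → ℝ := fun s => u s * ‖y s‖ with hv
    have hvasm : AEStronglyMeasurable v (volume.restrict (Ioc s₀ t)) :=
      hucont.aestronglyMeasurable.mul (hfasm t)
    have hu2 : Integrable (fun s => u s ^ 2) (volume.restrict (Ioc s₀ t)) := by
      have hone : IntegrableOn (fun _ : ℝ => (1:ℝ)) (Ioc s₀ t) volume :=
        integrableOn_const measure_Ioc_lt_top.ne
      refine Integrable.mono' hone ((hucont.pow 2).aestronglyMeasurable) ?_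
      filter_upwards [ae_restrict_mem measurableSet_Ioc] with s hs
      rw [Real.norm_of_nonneg (sq_nonneg _)]
      exact huble s hs
    have hv2 : Integrable (fun s => v s ^ 2) (volume.restrict (Ioc s₀ t)) := by
      have hasm : AEStronglyMeasurable (fun s => v s ^ 2) (volume.restrict (Ioc s₀ t)) := by
        have heq : (fun s => v s ^ 2) = fun s => v s * v s := by
          funext s; exact pow_two (v s)
        rw [heq]; exact hvasm.mul hvasm
      refine Integrable.mono' (hf2Ioc t) hasm ?_
      filter_upwards [ae_restrict_mem measurableSet_Ioc] with s hs
      have h2 : v s ^ 2 = u s ^ 2 * ‖y s‖ ^ 2 := by rw [hv]; simp only; ring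
      rw [Real.norm_of_nonneg (sq_nonneg _), h2]
      calc u s ^ 2 * ‖y s‖ ^ 2 ≤ 1 * ‖y s‖ ^ 2 :=
            mul_le_mul_of_nonneg_right (huble s hs) (sq_nonneg _)
        _ = ‖y s‖ ^ 2 := one_mul _
    have huv : Integrable (fun s => u s * v s) (volume.restrict (Ioc s₀ t)) := by
      refine Integrable.mono' (hfIoc t) (hucont.aestronglyMeasurable.mul hvasm) ?_
      filter_upwards [ae_restrict_mem measurableSet_Ioc] with s hs
      have h1 := huble s hs
      have h2 : u s * v s = u s ^ 2 * ‖y s‖ := by rw [hv]; ring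
      rw [Real.norm_of_nonneg (by rw [h2]; positivity), h2]
      nlinarith [norm_nonneg (y s), sq_nonneg (u s)]
    have hcs0 := cs_integral hu2 hv2 huv
    have e1 : ∫ s in s₀..t, exp (-lam * (t - s)) * ‖y s‖
        = ∫ s, u s * v s ∂(volume.restrict (Ioc s₀ t)) := by
      rw [intervalIntegral.integral_of_le ht]
      apply integral_congr_ae
      filter_upwards with s
      rw [hv]
      simp only
      rw [← husq s]
      ring
    have e2 : ∫ s in s₀..t, exp (-lam * (t - s)) * ‖y s‖ ^ 2
        = ∫ s, v s ^ 2 ∂(volume.restrict (Ioc s₀ t)) := by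
      rw [intervalIntegral.integral_of_le ht]
      apply integral_congr_ae
      filter_upwards with s
      rw [hv]
      simp only
      rw [mul_pow, husq s]
    have e0 : ∫ s, u s ^ 2 ∂(volume.restrict (Ioc s₀ t))
        = ∫ s in s₀..t, exp (-lam * (t - s)) := by
      rw [intervalIntegral.integral_of_le ht]
      apply integral_congr_ae
      filter_upwards with s
      rw [husq s]
    have hw : ∫ s in s₀..t, exp (-lam * (t - s)) ≤ 1 / lam := by
      have hder : ∀ s ∈ Set.uIcc s₀ t,
          HasDerivAt (fun s => exp (-lam * (t - s)) / lam) (exp (-lam * (t - s))) s := by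
        intro s _
        have h1 : HasDerivAt (fun s : ℝ => t - s) (-1) s := by
          simpa using (hasDerivAt_id s).const_sub t
        have h2 : HasDerivAt (fun s : ℝ => -lam * (t - s)) (-lam * -1) s := h1.const_mul (-lam)
        have h3 := (h2.exp).div_const lam
        convert h3 using 1
        · rfl
        · rfl
        · rw [eq_div_iff hlam.ne']; ring
      have hval := intervalIntegral.integral_eq_sub_of_hasDerivAt hder
        ((Real.continuous_exp.comp
          (continuous_const.mul (continuous_const.sub continuous_id))).intervalIntegrable _ _)
      rw [hval]
      have h4 : exp (-lam * (t - t)) = 1 := by simp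
      rw [h4]
      have h5 : 0 < exp (-lam * (t - s₀)) := exp_pos _
      rw [div_sub_div_same, div_le_div_iff₀ hlam hlam]
      nlinarith
    have hcs : (∫ s in s₀..t, exp (-lam * (t - s)) * ‖y s‖) ^ 2
        ≤ (1 / lam) * ∫ s in s₀..t, exp (-lam * (t - s)) * ‖y s‖ ^ 2 := by
      rw [e1, e2]
      calc (∫ s, u s * v s ∂(volume.restrict (Ioc s₀ t))) ^ 2
          ≤ (∫ s, u s ^ 2 ∂(volume.restrict (Ioc s₀ t)))
            * ∫ s, v s ^ 2 ∂(volume.restrict (Ioc s₀ t)) := hcs0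
        _ ≤ (1 / lam) * ∫ s, v s ^ 2 ∂(volume.restrict (Ioc s₀ t)) := by
            apply mul_le_mul_of_nonneg_right
            · rw [e0]; exact hw
            · rw [← e2]; exact hJnn
    -- combine
    have hexpsq : exp (-lam * (t - s₀)) * exp (-lam * (t - s₀)) = exp (-(2 * lam) * (t - s₀)) := by
      rw [← Real.exp_add]; ring_nf
    have hsqle := mul_self_le_mul_self (norm_nonneg (y t)) hA
    set a : ℝ := D * exp (-lam * (t - s₀)) * ‖y s₀‖ with ha
    set b : ℝ := D * M * ∫ s in s₀..t, exp (-lam * (t - s)) * ‖y s‖ with hb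
    set J : ℝ := ∫ s in s₀..t, exp (-lam * (t - s)) * ‖y s‖ ^ 2 with hJ
    have h1 : ‖y t‖ ^ 2 ≤ (a + b) ^ 2 := by rw [pow_two, pow_two]; exact hsqle
    have h2 : (a + b) ^ 2 ≤ 2 * a ^ 2 + 2 * b ^ 2 := by nlinarith [sq_nonneg (a - b)]
    have h3 : 2 * a ^ 2 = 2 * D ^ 2 * ‖y s₀‖ ^ 2 * exp (-(2 * lam) * (t - s₀)) := by
      rw [ha, ← hexpsq]; ring
    have h4 : 2 * b ^ 2 = 2 * D ^ 2 * M ^ 2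
        * (∫ s in s₀..t, exp (-lam * (t - s)) * ‖y s‖) ^ 2 := by rw [hb]; ring
    have h6 : 2 * D ^ 2 * M ^ 2 * (∫ s in s₀..t, exp (-lam * (t - s)) * ‖y s‖) ^ 2
        ≤ 2 * D ^ 2 * M ^ 2 * ((1 / lam) * J) :=
      mul_le_mul_of_nonneg_left hcs (by positivity)
    have h7 : c1 * J = 2 * D ^ 2 * M ^ 2 * ((1 / lam) * J) := by rw [hc1def]; ring
    rw [h7]
    linarith
  -- ==== global L² estimate via Tonelli ====
  set P : ℝ → ℝ := fun t => 2 * D ^ 2 * ‖y s₀‖ ^ 2 * exp (-(2 * lam) * (t - s₀)) with hPdef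
  set R : ℝ → ℝ := fun t => ∫ s in s₀..t, exp (-lam * (t - s)) * G s with hRdef
  set Ibar : ℝ≥0∞ := ∫⁻ t in Ici s₀, ENNReal.ofReal (G t) with hIbar
  have hPcont : Continuous P := by
    rw [hPdef]
    exact continuous_const.mul (Real.continuous_exp.comp
      (continuous_const.mul (continuous_id.sub continuous_const)))
  have hPnn : ∀ t, 0 ≤ P t := fun t => by rw [hPdef]; positivity
  have hPint : IntegrableOn P (Ici s₀) := by
    rw [hPdef, integrableOn_Ici_iff_integrableOn_Ioi]
    exact (exp_decay_integrableOn s₀ (2 * lam) (by linarith)).const_mul _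
  have hPval : ∫ t in Ici s₀, P t = D ^ 2 * ‖y s₀‖ ^ 2 / lam := by
    rw [hPdef]
    simp only
    rw [MeasureTheory.integral_Ici_eq_integral_Ioi, MeasureTheory.integral_const_mul,
      exp_decay_integral s₀ (2 * lam) (by linarith)]
    field_simp
  have hTermA : ∫⁻ t in Ici s₀, ENNReal.ofReal (P t)
      = ENNReal.ofReal (D ^ 2 * ‖y s₀‖ ^ 2 / lam) := by
    rw [← ofReal_integral_eq_lintegral_ofReal hPint
      (Filter.Eventually.of_forall fun t => hPnn t), hPval]
  have hRint : ∀ t : ℝ, IntegrableOn (fun s => exp (-lam * (t - s)) * G s) (Ioc s₀ t) := by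
    intro t
    refine Integrable.mono' (hGIoc t)
      (((Real.continuous_exp.comp
        (continuous_const.mul (continuous_const.sub continuous_id))).aestronglyMeasurable).mul
        hGm.aestronglyMeasurable) ?_
    filter_upwards [ae_restrict_mem measurableSet_Ioc] with s hs
    rw [Real.norm_of_nonneg (mul_nonneg (exp_pos _).le (hGnn s))]
    have hle1 : exp (-lam * (t - s)) ≤ 1 := by
      have : -lam * (t - s) ≤ 0 := by nlinarith [hs.2]
      simpa using Real.exp_le_exp.2 this
    calc exp (-lam * (t - s)) * G s ≤ 1 * G s := mul_le_mul_of_nonneg_right hle1 (hGnn s)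
      _ = G s := one_mul _
  have hRnn : ∀ t, s₀ ≤ t → 0 ≤ R t := by
    intro t ht
    rw [hRdef]
    exact intervalIntegral.integral_nonneg ht
      (fun s _ => mul_nonneg (exp_pos _).le (hGnn s))
  -- a.e. pointwise bound
  have hae_main : ∀ᵐ t ∂(volume.restrict (Ici s₀)),
      ENNReal.ofReal (G t) ≤ ENNReal.ofReal (P t) + ENNReal.ofReal (c1 * R t) := by
    filter_upwards [hGae, ae_restrict_mem measurableSet_Ici] with t hGt ht
    have hR : R t = ∫ s in s₀..t, exp (-lam * (t - s)) * ‖y s‖ ^ 2 := by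
      rw [hRdef]
      simp only
      rw [intervalIntegral.integral_of_le ht, intervalIntegral.integral_of_le ht]
      apply integral_congr_ae
      filter_upwards [ae_restrict_of_ae_restrict_of_subset (hsubIoc t) hGae] with s hsae
      rw [hsae]
    rw [← hGt]
    calc ENNReal.ofReal (‖y t‖ ^ 2) ≤ ENNReal.ofReal (P t + c1 * R t) := by
          apply ENNReal.ofReal_le_ofReal
          rw [hR, hPdef]
          exact key t ht
      _ ≤ ENNReal.ofReal (P t) + ENNReal.ofReal (c1 * R t) := ENNReal.ofReal_add_le
  -- the double-integral (Tonelli) bound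
  have hswap : ∫⁻ t in Ici s₀, ∫⁻ s in Ioc s₀ t, ENNReal.ofReal (exp (-lam * (t - s)) * G s)
      ≤ ENNReal.ofReal (1 / lam) * Ibar := by
    set S : Set (ℝ × ℝ) := {q : ℝ × ℝ | s₀ < q.2 ∧ q.2 ≤ q.1} with hSdef
    have hS : MeasurableSet S := by
      rw [hSdef]
      exact (measurableSet_lt measurable_const measurable_snd).inter
        (measurableSet_le measurable_snd measurable_fst)
    set Ψ : ℝ × ℝ → ℝ≥0∞ :=
      fun p => S.indicator (fun q => ENNReal.ofReal (exp (-lam * (q.1 - q.2)) * G q.2)) p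
      with hΨdef
    have hΨm : Measurable Ψ := by
      rw [hΨdef]
      refine Measurable.indicator ?_ hS
      apply Measurable.ennreal_ofReal
      exact ((Real.continuous_exp.comp
        (continuous_const.mul (continuous_fst.sub continuous_snd))).measurable).mul
        (hGm.comp measurable_snd)
    have hinner : ∀ t : ℝ, ∫⁻ s in Ioc s₀ t, ENNReal.ofReal (exp (-lam * (t - s)) * G s)
        = ∫⁻ s, Ψ (t, s) := by
      intro t
      rw [← lintegral_indicator measurableSet_Ioc]
      apply lintegral_congr
      intro s
      by_cases hs : s ∈ Ioc s₀ t
      · rw [Set.indicator_of_mem hs, hΨdef]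
        simp only
        rw [Set.indicator_of_mem (show (t, s) ∈ S from ⟨hs.1, hs.2⟩)]
      · rw [Set.indicator_of_notMem hs, hΨdef]
        simp only
        rw [Set.indicator_of_notMem (by
          intro hq
          exact hs ⟨hq.1, hq.2⟩)]
    calc ∫⁻ t in Ici s₀, ∫⁻ s in Ioc s₀ t, ENNReal.ofReal (exp (-lam * (t - s)) * G s)
        ≤ ∫⁻ t, ∫⁻ s, Ψ (t, s) := by
          simp_rw [hinner]
          exact lintegral_mono' Measure.restrict_le_self le_rfl
      _ = ∫⁻ s, ∫⁻ t, Ψ (t, s) := lintegral_lintegral_swap hΨm.aemeasurable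
      _ = ∫⁻ s, (Ioi s₀).indicator
            (fun s' => ENNReal.ofReal (G s')
              * ∫⁻ t in Ici s', ENNReal.ofReal (exp (-lam * (t - s')))) s := by
          apply lintegral_congr
          intro s
          by_cases hs : s₀ < s
          · rw [Set.indicator_of_mem (show s ∈ Ioi s₀ from hs)]
            have hfib : ∀ t, Ψ (t, s) = (Ici s).indicator
                (fun t => ENNReal.ofReal (exp (-lam * (t - s))) * ENNReal.ofReal (G s)) t := by
              intro t
              by_cases ht : s ≤ t
              · rw [hΨdef]
                simp only
                rw [Set.indicator_of_mem (show (t, s) ∈ S from ⟨hs, ht⟩),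
                  Set.indicator_of_mem (show t ∈ Ici s from ht),
                  ENNReal.ofReal_mul (exp_pos _).le]
              · rw [hΨdef]
                simp only
                rw [Set.indicator_of_notMem (show (t, s) ∉ S from fun hq => ht hq.2),
                  Set.indicator_of_notMem (show t ∉ Ici s from ht)]
            simp_rw [hfib]
            rw [lintegral_indicator measurableSet_Ici,
              lintegral_mul_const' (ENNReal.ofReal (G s)) _ ENNReal.ofReal_ne_top, mul_comm]
          · rw [Set.indicator_of_notMem (by simpa using hs)]
            have hfib0 : ∀ t, Ψ (t, s) = 0 := by
              intro t
              rw [hΨdef]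
              simp only
              exact Set.indicator_of_notMem (fun hq => hs hq.1) _
            simp_rw [hfib0]
            exact lintegral_zero
      _ = ENNReal.ofReal (1 / lam) * ∫⁻ s in Ioi s₀, ENNReal.ofReal (G s) := by
          rw [lintegral_indicator measurableSet_Ioi]
          rw [setLIntegral_congr_fun measurableSet_Ioi
            (fun s _ => by rw [exp_decay_lintegral_Ici s lam hlam, mul_comm])]
          exact lintegral_const_mul' _ _ ENNReal.ofReal_ne_top
      _ ≤ ENNReal.ofReal (1 / lam) * Ibar := by
          rw [hIbar]
          exact mul_le_mul_right (lintegral_mono_set Ioi_subset_Ici_self) _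
  -- main inequality in ℝ≥0∞
  have hmain : Ibar ≤ ENNReal.ofReal (D ^ 2 * ‖y s₀‖ ^ 2 / lam)
      + ENNReal.ofReal c1 * (ENNReal.ofReal (1 / lam) * Ibar) := by
    calc Ibar ≤ ∫⁻ t in Ici s₀, (ENNReal.ofReal (P t) + ENNReal.ofReal (c1 * R t)) :=
          lintegral_mono_ae hae_main
      _ = (∫⁻ t in Ici s₀, ENNReal.ofReal (P t))
          + ∫⁻ t in Ici s₀, ENNReal.ofReal (c1 * R t) :=
          lintegral_add_left (hPcont.measurable.ennreal_ofReal) _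
      _ ≤ ENNReal.ofReal (D ^ 2 * ‖y s₀‖ ^ 2 / lam)
          + ENNReal.ofReal c1 * (ENNReal.ofReal (1 / lam) * Ibar) := by
          rw [hTermA]
          apply add_le_add_right
          have hsplit : ∫⁻ t in Ici s₀, ENNReal.ofReal (c1 * R t)
              = ENNReal.ofReal c1 * ∫⁻ t in Ici s₀, ENNReal.ofReal (R t) := by
            simp_rw [ENNReal.ofReal_mul hc1nn]
            exact lintegral_const_mul' _ _ ENNReal.ofReal_ne_top
          rw [hsplit]
          apply mul_le_mul_right
          have hRlift : ∫⁻ t in Ici s₀, ENNReal.ofReal (R t)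
              = ∫⁻ t in Ici s₀, ∫⁻ s in Ioc s₀ t,
                  ENNReal.ofReal (exp (-lam * (t - s)) * G s) := by
            apply setLIntegral_congr_fun measurableSet_Ici
            intro t ht
            rw [hRdef]
            simp only
            rw [intervalIntegral.integral_of_le ht,
              ofReal_integral_eq_lintegral_ofReal (hRint t)
                (Filter.Eventually.of_forall fun s => mul_nonneg (exp_pos _).le (hGnn s))]
          rw [hRlift]
          exact hswap
  -- pass back to real numbers
  have hIeq : ∫ t in Ici s₀, ‖y t‖ ^ 2 = ∫ t in Ici s₀, G t := integral_congr_ae hGae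
  have hInn2 : 0 ≤ ∫ t in Ici s₀, G t :=
    integral_nonneg (fun t => hGnn t)
  have hIbar_eq : ENNReal.ofReal (∫ t in Ici s₀, G t) = Ibar := by
    rw [hIbar]
    exact ofReal_integral_eq_lintegral_ofReal hIntG (Filter.Eventually.of_forall fun t => hGnn t)
  set I : ℝ := ∫ t in Ici s₀, G t with hIdef
  have hreal : I ≤ D ^ 2 * ‖y s₀‖ ^ 2 / lam + c1 * (1 / lam) * I := by
    have h1 : ENNReal.ofReal I ≤ ENNReal.ofReal (D ^ 2 * ‖y s₀‖ ^ 2 / lam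
        + c1 * (1 / lam) * I) := by
      rw [ENNReal.ofReal_add (by positivity) (by positivity)]
      calc ENNReal.ofReal I = Ibar := hIbar_eq
        _ ≤ ENNReal.ofReal (D ^ 2 * ‖y s₀‖ ^ 2 / lam)
            + ENNReal.ofReal c1 * (ENNReal.ofReal (1 / lam) * Ibar) := hmain
        _ = ENNReal.ofReal (D ^ 2 * ‖y s₀‖ ^ 2 / lam)
            + ENNReal.ofReal (c1 * (1 / lam) * I) := by
            rw [← hIbar_eq, ← ENNReal.ofReal_mul (by positivity : (0:ℝ) ≤ 1 / lam),
              ← ENNReal.ofReal_mul hc1nn, mul_assoc]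
    exact (ENNReal.ofReal_le_ofReal_iff (by positivity)).mp h1
  rw [hIeq]
  have hc1e : c1 * (1 / lam) = 2 * D ^ 2 * M ^ 2 / lam ^ 2 := by
    rw [hc1def, div_mul_div_comm, mul_one, ← pow_two]
  rw [hc1e] at hreal
  have hl2 : (0:ℝ) < lam ^ 2 := by positivity
  have h2 : lam ^ 2 * I ≤ lam * D ^ 2 * ‖y s₀‖ ^ 2 + 2 * D ^ 2 * M ^ 2 * I := by
    have := mul_le_mul_of_nonneg_left hreal hl2.le
    calc lam ^ 2 * I ≤ lam ^ 2 * (D ^ 2 * ‖y s₀‖ ^ 2 / lam + 2 * D ^ 2 * M ^ 2 / lam ^ 2 * I) :=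
          this
      _ = lam * D ^ 2 * ‖y s₀‖ ^ 2 + 2 * D ^ 2 * M ^ 2 * I := by
          field_simp
  rw [div_mul_eq_mul_div, le_div_iff₀ hden]
  linarith
end

section
/- Consider A_σ = [[1,1],[0,σ]], B = [1,0]ᵀ, C = [1,0], and a feedback K = [κ₁,κ₂]. Let Ξ_σ = I + ξ(A_σ + BK) for ξ > 0, and suppose the initial state y₀ = (y₀₁, 0)ᵀ has vanishing second component. Then for any two parameters σ, ς and every j ∈ ℕ, K(Ξ_ς^j − Ξ_σ^j) y₀ = 0 and C(Ξ_ς^j − Ξ_σ^j) y₀ = 0; i.e., the input and output data of the discretized closed-loop systems coincide for all parameters. -/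
/-- For A_σ = [[1,1],[0,σ]], B = [1,0]ᵀ, C = [1,0], K = [κ₁,κ₂],
Ξ_σ = I + ξ(A_σ + BK), and initial state y₀ = (y₀₁, 0)ᵀ, the input and output data of the
discretized closed-loop systems coincide for all parameters:
K(Ξ_ς^j − Ξ_σ^j)y₀ = 0 and C(Ξ_ς^j − Ξ_σ^j)y₀ = 0 for all j. -/
theorem stmt_11 (ξ κ₁ κ₂ y₀₁ : ℝ) (hξ : 0 < ξ) (σ ς : ℝ) :
    let A : ℝ → Matrix (Fin 2) (Fin 2) ℝ := fun a => !![1, 1; 0, a]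
    let B : Matrix (Fin 2) (Fin 1) ℝ := !![1; 0]
    let K : Matrix (Fin 1) (Fin 2) ℝ := !![κ₁, κ₂]
    let Cm : Matrix (Fin 1) (Fin 2) ℝ := !![1, 0]
    let Ξ : ℝ → Matrix (Fin 2) (Fin 2) ℝ := fun a => 1 + ξ • (A a + B * K)
    let y₀ : Matrix (Fin 2) (Fin 1) ℝ := !![y₀₁; 0]
    ∀ j : ℕ, K * (Ξ ς ^ j - Ξ σ ^ j) * y₀ = 0 ∧ Cm * (Ξ ς ^ j - Ξ σ ^ j) * y₀ = 0 := by
  intro A B K Cm Ξ y₀ j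
  have key : ∀ a : ℝ, ∀ n : ℕ, Ξ a ^ n * y₀ = !![(1 + ξ * (1 + κ₁)) ^ n * y₀₁; 0] := by
    intro a n
    induction n with
    | zero => simp [y₀]
    | succ n ih =>
      rw [pow_succ', Matrix.mul_assoc, ih]
      show (1 + ξ • (A a + B * K)) * _ = _
      simp only [A, B, K]
      ext i k
      fin_cases i <;> fin_cases k <;>
        simp [Matrix.mul_apply, Fin.sum_univ_two, Matrix.one_apply, pow_succ] <;> ring
  have h : (Ξ ς ^ j - Ξ σ ^ j) * y₀ = 0 := by
    rw [Matrix.sub_mul, key, key, sub_self]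
  constructor <;> rw [Matrix.mul_assoc, h, Matrix.mul_zero]
end
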